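/- For ω > 0 and ν ≥ 1, the function ψ(R) = R·exp(−ω(e^R − 1)^ν) on (0, ∞) has a stationary point exactly where R·ω·ν·e^R·(e^R − 1)^{ν−1} = 1, and such a stationary point exists and is unique. -/

import Mathlib

open Real Set

private lemma g_strictMono (ω ν : ℝ) (hω : 0 < ω) (hν : 1 ≤ ν) :
    StrictMonoOn (fun R : ℝ => R * ω * ν * Real.exp R * (Real.exp R - 1) ^ (ν - 1))
      (Ioi 0) := by
  intro x hx y hy hxy
  simp only [mem_Ioi] at hx hy
  have hν0 : (0:ℝ) < ν := lt_of_lt_of_le one_pos hν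
  have hex : (0:ℝ) < Real.exp x - 1 := by
    nlinarith [Real.add_one_le_exp x]
  have hey : Real.exp x - 1 ≤ Real.exp y - 1 := by
    have := Real.exp_lt_exp.2 hxy; linarith
  have hB : (Real.exp x - 1) ^ (ν - 1) ≤ (Real.exp y - 1) ^ (ν - 1) :=
    Real.rpow_le_rpow hex.le hey (by linarith)
  have hBx : (0:ℝ) < (Real.exp x - 1) ^ (ν - 1) := Real.rpow_pos_of_pos hex _
  have hA : x * ω * ν * Real.exp x < y * ω * ν * Real.exp y := by
    have h1 : x * Real.exp x < y * Real.exp y :=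
      mul_lt_mul hxy (Real.exp_lt_exp.2 hxy).le (Real.exp_pos x) hy.le
    nlinarith [mul_lt_mul_of_pos_right h1 (mul_pos hω hν0)]
  have hAy : (0:ℝ) < y * ω * ν * Real.exp y := by positivity
  calc x * ω * ν * Real.exp x * (Real.exp x - 1) ^ (ν - 1)
      < y * ω * ν * Real.exp y * (Real.exp x - 1) ^ (ν - 1) :=
        mul_lt_mul_of_pos_right hA hBx
    _ ≤ y * ω * ν * Real.exp y * (Real.exp y - 1) ^ (ν - 1) :=
        mul_le_mul_of_nonneg_left hB hAy.le

private lemma g_exists (ω ν : ℝ) (hω : 0 < ω) (hν : 1 ≤ ν) :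
    ∃ R : ℝ, 0 < R ∧ R * ω * ν * Real.exp R * (Real.exp R - 1) ^ (ν - 1) = 1 := by
  have hν0 : (0:ℝ) < ν := lt_of_lt_of_le one_pos hν
  set g : ℝ → ℝ := fun R => R * ω * ν * Real.exp R * (Real.exp R - 1) ^ (ν - 1) with hg
  have hcont : Continuous g := by
    apply Continuous.mul
    · exact ((continuous_id.mul continuous_const).mul continuous_const).mul Real.continuous_exp
    · exact (Real.continuous_exp.sub continuous_const).rpow_const
        (fun x => Or.inr (by linarith))
  set a : ℝ := min (1 / (2 * ω * ν)) (Real.log 2) with ha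
  set b : ℝ := max (1 / (ω * ν)) (Real.log 2) with hb
  have hlog2 : (0:ℝ) < Real.log 2 := Real.log_pos (by norm_num)
  have ha0 : 0 < a := lt_min (by positivity) hlog2
  have hab : a ≤ b := le_trans (min_le_right _ _) (le_max_right _ _)
  have hea : Real.exp a ≤ 2 := by
    have : a ≤ Real.log 2 := min_le_right _ _
    calc Real.exp a ≤ Real.exp (Real.log 2) := Real.exp_le_exp.2 this
      _ = 2 := Real.exp_log (by norm_num)
  have heapos : 0 < Real.exp a - 1 := by nlinarith [Real.add_one_le_exp a]
  have hga : g a ≤ 1 := by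
    have hBa : (Real.exp a - 1) ^ (ν - 1) ≤ 1 :=
      Real.rpow_le_one heapos.le (by linarith) (by linarith)
    have h1 : a * ω * ν ≤ 1 / 2 := by
      have : a ≤ 1 / (2 * ω * ν) := min_le_left _ _
      have h2 : (0:ℝ) < 2 * ω * ν := by positivity
      rw [le_div_iff₀ h2] at this
      linarith
    have hBa0 : (0:ℝ) ≤ (Real.exp a - 1) ^ (ν - 1) := (Real.rpow_pos_of_pos heapos _).le
    calc g a = a * ω * ν * Real.exp a * (Real.exp a - 1) ^ (ν - 1) := rfl
      _ ≤ a * ω * ν * Real.exp a * 1 := by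
          apply mul_le_mul_of_nonneg_left hBa
          positivity
      _ ≤ (1/2) * 2 * 1 := by
          have := mul_le_mul h1 hea (Real.exp_pos a).le (by norm_num)
          nlinarith
      _ = 1 := by norm_num
  have heb : (2:ℝ) ≤ Real.exp b := by
    have : Real.log 2 ≤ b := le_max_right _ _
    calc (2:ℝ) = Real.exp (Real.log 2) := (Real.exp_log (by norm_num)).symm
      _ ≤ Real.exp b := Real.exp_le_exp.2 this
  have hgb : 1 ≤ g b := by
    have hBb : 1 ≤ (Real.exp b - 1) ^ (ν - 1) :=
      Real.one_le_rpow (by linarith) (by linarith)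
    have h1 : 1 ≤ b * ω * ν := by
      have : 1 / (ω * ν) ≤ b := le_max_left _ _
      have h2 : (0:ℝ) < ω * ν := by positivity
      rw [div_le_iff₀ h2] at this
      linarith
    have hb0 : 0 < b := lt_of_lt_of_le ha0 hab
    calc (1:ℝ) = 1 * 1 * 1 := by norm_num
      _ ≤ b * ω * ν * Real.exp b * (Real.exp b - 1) ^ (ν - 1) := by
          apply mul_le_mul _ hBb (by norm_num) (by positivity)
          apply mul_le_mul h1 (by linarith) (by norm_num) (by positivity)
      _ = g b := rfl
  have h1mem : (1:ℝ) ∈ Icc (g a) (g b) := ⟨hga, hgb⟩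
  obtain ⟨R, hRmem, hR⟩ := intermediate_value_Icc hab hcont.continuousOn h1mem
  exact ⟨R, lt_of_lt_of_le ha0 hRmem.1, hR⟩

/-- for `ω > 0` and `ν ≥ 1`, `ψ(R) = R·exp(−ω(e^R − 1)^ν)` on `(0,∞)`
has a stationary point exactly where `R·ω·ν·e^R·(e^R − 1)^{ν−1} = 1`, and such a
stationary point exists and is unique. -/
theorem statement6
    (ω ν : ℝ) (hω : 0 < ω) (hν : 1 ≤ ν)
    (ψ : ℝ → ℝ) (hψ : ∀ R, ψ R = R * Real.exp (-(ω * (Real.exp R - 1) ^ ν))) :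
    (∀ R : ℝ, 0 < R →
      (deriv ψ R = 0 ↔
        R * ω * ν * Real.exp R * (Real.exp R - 1) ^ (ν - 1) = 1)) ∧
    (∃! R : ℝ, 0 < R ∧
      R * ω * ν * Real.exp R * (Real.exp R - 1) ^ (ν - 1) = 1) := by
  have hψeq : ψ = fun R => R * Real.exp (-(ω * (Real.exp R - 1) ^ ν)) := funext hψ
  subst hψeq
  constructor
  · intro R hR
    have hE : 0 < Real.exp R - 1 := by nlinarith [Real.add_one_le_exp R]
    have h1 : HasDerivAt (fun R => Real.exp R - 1) (Real.exp R) R :=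
      (Real.hasDerivAt_exp R).sub_const 1
    have h2 : HasDerivAt (fun R => (Real.exp R - 1) ^ ν)
        (Real.exp R * ν * (Real.exp R - 1) ^ (ν - 1)) R :=
      h1.rpow_const (Or.inl hE.ne')
    have h3 : HasDerivAt (fun R => -(ω * (Real.exp R - 1) ^ ν))
        (-(ω * (Real.exp R * ν * (Real.exp R - 1) ^ (ν - 1)))) R :=
      (h2.const_mul ω).neg
    have h4 : HasDerivAt (fun R => Real.exp (-(ω * (Real.exp R - 1) ^ ν)))
        (Real.exp (-(ω * (Real.exp R - 1) ^ ν)) *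
          (-(ω * (Real.exp R * ν * (Real.exp R - 1) ^ (ν - 1))))) R := h3.exp
    have h5 : HasDerivAt (fun R => R * Real.exp (-(ω * (Real.exp R - 1) ^ ν))) _ R :=
      (hasDerivAt_id R).mul h4
    simp only [id_eq] at h5
    rw [h5.deriv]
    have hEx : (0:ℝ) < Real.exp (-(ω * (Real.exp R - 1) ^ ν)) := Real.exp_pos _
    constructor
    · intro h
      have : Real.exp (-(ω * (Real.exp R - 1) ^ ν)) *
          (1 - R * ω * ν * Real.exp R * (Real.exp R - 1) ^ (ν - 1)) = 0 := by
        rw [← h]; ring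
      rcases mul_eq_zero.1 this with h' | h'
      · exact absurd h' hEx.ne'
      · linarith
    · intro h
      have heq : 1 * Real.exp (-(ω * (Real.exp R - 1) ^ ν)) +
          R * (Real.exp (-(ω * (Real.exp R - 1) ^ ν)) *
            -(ω * (Real.exp R * ν * (Real.exp R - 1) ^ (ν - 1)))) =
          Real.exp (-(ω * (Real.exp R - 1) ^ ν)) *
            (1 - R * ω * ν * Real.exp R * (Real.exp R - 1) ^ (ν - 1)) := by ring
      rw [heq, h]
      ring
  · obtain ⟨R, hR0, hR⟩ := g_exists ω ν hω hν
    refine ⟨R, ⟨hR0, hR⟩, ?_⟩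
    intro y ⟨hy0, hy⟩
    exact (g_strictMono ω ν hω hν).injOn (mem_Ioi.2 hy0) (mem_Ioi.2 hR0) (by rw [hy, hR])
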